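/- arXiv:1203.3665 — 2 statements merged into one kernel-verified Lean document; each statement's English description precedes it below -/
import Mathlib

section
/- Define ξ_j(x) = Σ_{k=0}^j a^{(-1)}_{jk} x^{k(n-k)}, where (a^{(-1)}_{jk}) is the inverse of the lower-triangular matrix a_{kj} = k!(n-k)!/(j!(k-j)!(n-k-j)!). Define operators (D_r f)(x) = d/dx (x^{-(n-2r+2)} f(x)) and D^{r,j}(x) = D_r(D_{r-1}(···(D_1(x^n ξ_j(x)))···)). Then for each j ≤ n/2 and each 1 ≤ r ≤ j-1, D^{r,j}(x) = x^{n-2r} · r! · Σ_{k=r}^{j} a^{(-1)}_{jk} a_{kr} x^{(k-r)(n-k-r)}. -/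
/-- The matrix entries a_{kj} = k!(n-k)!/(j!(k-j)!(n-k-j)!) (for j ≤ k, 0 otherwise). -/
noncomputable def aCW (n k j : ℕ) : ℝ :=
  if j ≤ k then
    ((Nat.factorial k * Nat.factorial (n - k) : ℕ) : ℝ) /
      ((Nat.factorial j * Nat.factorial (k - j) * Nat.factorial (n - k - j) : ℕ) : ℝ)
  else 0

/-- The operator (D_r f)(x) = d/dx (x^{-(n-2r+2)} f(x)). -/
noncomputable def Dop (n r : ℕ) (f : ℝ → ℝ) : ℝ → ℝ :=
  fun x => deriv (fun y => f y / y ^ (n - 2 * r + 2)) x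

/-- The iterated operator D_r(D_{r-1}(···(D_1 g)···)). -/
noncomputable def Diter (n : ℕ) (g : ℝ → ℝ) : ℕ → (ℝ → ℝ)
  | 0 => g
  | r + 1 => Dop n (r + 1) (Diter n g r)

lemma aux_exp (n k r : ℕ) (hk : r + 1 ≤ k) (hn : k + r + 1 ≤ n) :
    (k - r) * (n - k - r) - 1 = (n - 2*(r+1)) + (k - (r+1)) * (n - k - (r+1)) := by
  obtain ⟨a, ha⟩ : ∃ a, k = r + 1 + a := ⟨k - (r+1), by omega⟩
  obtain ⟨b, hb⟩ : ∃ b, n = k + r + 1 + b := ⟨n - (k+r+1), by omega⟩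
  subst hb ha
  have e1 : r + 1 + a - r = a + 1 := by omega
  have e2 : r + 1 + a + r + 1 + b - (r+1+a) - r = b + 1 := by omega
  have e3 : r + 1 + a - (r+1) = a := by omega
  have e4 : r + 1 + a + r + 1 + b - (r+1+a) - (r+1) = b := by omega
  have e5 : r + 1 + a + r + 1 + b - 2*(r+1) = a + b := by omega
  rw [e1, e2, e3, e4, e5]
  have h : (a+1)*(b+1) = a*b + a + b + 1 := by ring
  rw [h]
  generalize a*b = c
  omega

lemma aux_coeff (n k r : ℕ) (hk : r + 1 ≤ k) (hn : k + r + 1 ≤ n) :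
    aCW n k r * (((k - r) * (n - k - r) : ℕ) : ℝ) = (r + 1 : ℝ) * aCW n k (r + 1) := by
  obtain ⟨a, ha⟩ : ∃ a, k = r + 1 + a := ⟨k - (r+1), by omega⟩
  obtain ⟨b, hb⟩ : ∃ b, n = k + r + 1 + b := ⟨n - (k+r+1), by omega⟩
  subst hb ha
  have e1 : r + 1 + a - r = a + 1 := by omega
  have e2 : r + 1 + a + r + 1 + b - (r+1+a) - r = b + 1 := by omega
  have e3 : r + 1 + a - (r+1) = a := by omega
  have e4 : r + 1 + a + r + 1 + b - (r+1+a) - (r+1) = b := by omega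
  rw [aCW, aCW, if_pos (by omega : r ≤ r+1+a), if_pos (by omega : r+1 ≤ r+1+a), e1, e2, e3, e4]
  push_cast
  rw [Nat.factorial_succ a, Nat.factorial_succ b, Nat.factorial_succ r]
  have h1 : (Nat.factorial r : ℝ) ≠ 0 := Nat.cast_ne_zero.mpr (Nat.factorial_ne_zero r)
  have h2 : (Nat.factorial a : ℝ) ≠ 0 := Nat.cast_ne_zero.mpr (Nat.factorial_ne_zero a)
  have h3 : (Nat.factorial b : ℝ) ≠ 0 := Nat.cast_ne_zero.mpr (Nat.factorial_ne_zero b)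
  push_cast
  field_simp

/-- The identity D^{r,j}(x) = x^{n-2r} · r! · Σ_{k=r}^j a⁻¹_{jk} a_{kr} x^{(k-r)(n-k-r)},
    where ξ_j(x) = Σ_{k=0}^j a⁻¹_{jk} x^{k(n-k)} and a⁻¹ is the inverse of the
    lower-triangular matrix (a_{kj}). -/
theorem stmt6 (n : ℕ) (ainv : ℕ → ℕ → ℝ)
    (hinv : ∀ j ≤ n / 2, ∀ k ≤ n / 2,
      (∑ l ∈ Finset.range (n / 2 + 1), ainv j l * aCW n l k) =
        if j = k then 1 else 0)
    (ξ : ℕ → ℝ → ℝ)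
    (hξ : ∀ j x, ξ j x = ∑ k ∈ Finset.range (j + 1), ainv j k * x ^ (k * (n - k)))
    (j r : ℕ) (hj : 2 * j ≤ n) (hr : 1 ≤ r) (hrj : r ≤ j - 1)
    (x : ℝ) (hx : 0 < x) :
    Diter n (fun y => y ^ n * ξ j y) r x =
      x ^ (n - 2 * r) * (Nat.factorial r : ℝ) *
        ∑ k ∈ Finset.Icc r j, ainv j k * aCW n k r * x ^ ((k - r) * (n - k - r)) := by
  have hj2 : 2 ≤ j := by omega
  suffices H : ∀ r, r ≤ j - 1 → ∀ x : ℝ, 0 < x →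
      Diter n (fun y => y ^ n * ξ j y) r x =
      x ^ (n - 2 * r) * (Nat.factorial r : ℝ) *
        ∑ k ∈ Finset.Icc r j, ainv j k * aCW n k r * x ^ ((k - r) * (n - k - r)) by
    exact H r hrj x hx
  clear hx
  intro r
  induction r with
  | zero =>
    intro _ x hx
    simp only [Diter, hξ, Nat.sub_zero, Nat.factorial_zero, Nat.cast_one, mul_one]
    rw [Finset.range_eq_Ico, Finset.Ico_add_one_right_eq_Icc]
    simp only [Finset.mul_sum]
    refine Finset.sum_congr rfl fun k hk => ?_
    simp only [Finset.mem_Icc] at hk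
    have : aCW n k 0 = 1 := by
      rw [aCW, if_pos (Nat.zero_le _)]
      rw [Nat.factorial_zero, Nat.sub_zero, Nat.sub_zero, one_mul]
      rw [div_self]
      exact Nat.cast_ne_zero.mpr (by positivity)
    rw [this, Nat.sub_zero]
    ring
  | succ r IH =>
    intro hrj1 z hz
    have hrj' : r ≤ j - 1 := by omega
    have hIH := IH hrj'
    show Dop n (r+1) (Diter n (fun y => y ^ n * ξ j y) r) z = _
    rw [Dop]
    have hexp : n - 2 * (r+1) + 2 = n - 2 * r := by omega
    have hev : (fun y => Diter n (fun y => y ^ n * ξ j y) r y / y ^ (n - 2 * (r+1) + 2))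
        =ᶠ[nhds z] (fun y => (Nat.factorial r : ℝ) *
          ∑ k ∈ Finset.Icc r j, ainv j k * aCW n k r * y ^ ((k - r) * (n - k - r))) := by
      filter_upwards [eventually_gt_nhds hz] with y hy
      rw [hIH y hy, hexp]
      have hy0 : (y : ℝ) ^ (n - 2 * r) ≠ 0 := pow_ne_zero _ (ne_of_gt hy)
      field_simp
    rw [hev.deriv_eq]
    have hder : HasDerivAt (fun y : ℝ => (Nat.factorial r : ℝ) *
          ∑ k ∈ Finset.Icc r j, ainv j k * aCW n k r * y ^ ((k - r) * (n - k - r)))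
        ((Nat.factorial r : ℝ) * ∑ k ∈ Finset.Icc r j, ainv j k * aCW n k r *
          ((((k - r) * (n - k - r) : ℕ) : ℝ) * z ^ ((k - r) * (n - k - r) - 1))) z := by
      refine HasDerivAt.const_mul _ (HasDerivAt.fun_sum fun k _ => ?_)
      exact (hasDerivAt_pow _ z).const_mul _
    rw [hder.deriv]
    rw [Finset.Icc_eq_cons_Ioc (by omega : r ≤ j), Finset.sum_cons, ← Finset.Icc_add_one_left_eq_Ioc]
    rw [Nat.sub_self, zero_mul, Nat.cast_zero, zero_mul, mul_zero]
    rw [zero_add]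
    simp only [Finset.mul_sum]
    refine Finset.sum_congr rfl fun k hk => ?_
    simp only [Finset.mem_Icc] at hk
    have hk1 : r + 1 ≤ k := hk.1
    have hn1 : k + r + 1 ≤ n := by omega
    have hc := aux_coeff n k r hk1 hn1
    rw [aux_exp n k r hk1 hn1, pow_add, Nat.factorial_succ]
    push_cast at hc ⊢
    linear_combination (Nat.factorial r : ℝ) * ainv j k * z ^ (n - 2 * (r + 1)) *
      z ^ ((k - (r + 1)) * (n - k - (r + 1))) * hc
end

section
/- With notation as in the previous statement, D^{j-1,j}(x) = x^{n-2j+2} · (j-1)! · (a_{j,j-1}/a_{jj}) · (x^{n-2j+1} - 1), and in particular D^{j-1,j}(x) ≥ 0 for all x ≥ 1 when n - 2j + 1 ≥ 0. -/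
open Finset

/-- Exponent tracking for the iterated operator applied to monomials. -/
def eAux (n k : ℕ) : ℕ → ℤ
  | 0 => (n : ℤ) + k * ((n : ℤ) - k)
  | p + 1 => eAux n k p - ((n : ℤ) - 2 * (p + 1) + 2) - 1

/-- Coefficient tracking for the iterated operator applied to monomials. -/
noncomputable def cAux (n : ℕ) (a0 : ℝ) (k : ℕ) : ℕ → ℝ
  | 0 => a0
  | p + 1 => cAux n a0 k p * ((eAux n k p - ((n : ℤ) - 2 * (p + 1) + 2) : ℤ) : ℝ)

lemma eAux_closed (n k p : ℕ) :
    eAux n k p = (n : ℤ) + k * ((n : ℤ) - k) - p * ((n : ℤ) + 2 - p) := by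
  induction p with
  | zero => simp [eAux]
  | succ p ih => rw [eAux, ih]; push_cast; ring

lemma eAux_sub (n k p : ℕ) :
    eAux n k p - ((n : ℤ) - 2 * ((p : ℤ) + 1) + 2) = ((k : ℤ) - p) * ((n : ℤ) - k - p) := by
  rw [eAux_closed]; ring

lemma cAux_closed (n : ℕ) (a0 : ℝ) (k p : ℕ) :
    cAux n a0 k p = a0 * ((∏ i ∈ range p, (((k : ℤ) - i) * ((n : ℤ) - k - i)) : ℤ) : ℝ) := by
  induction p with
  | zero => simp [cAux]
  | succ p ih =>
    rw [cAux, ih, prod_range_succ, eAux_sub]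
    push_cast; ring

lemma diter_eq (n j : ℕ) (a : ℕ → ℝ) (hjn : 2 * j ≤ n) (g : ℝ → ℝ)
    (hg : ∀ y : ℝ, 0 < y → g y = ∑ k ∈ range (j + 1), a k * y ^ (eAux n k 0)) :
    ∀ p, p ≤ j - 1 → ∀ x : ℝ, 0 < x →
      Diter n g p x = ∑ k ∈ range (j + 1), cAux n (a k) k p * x ^ (eAux n k p) := by
  intro p
  induction p with
  | zero => intro _ x hx; simpa [Diter, cAux] using hg x hx
  | succ p ih =>
    intro hp x hx
    have hp' : p ≤ j - 1 := by omega
    have h2 : 2 * (p + 1) + 2 ≤ n := by omega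
    have hs : ((n - 2 * (p + 1) + 2 : ℕ) : ℤ) = (n : ℤ) - 2 * ((p : ℤ) + 1) + 2 := by
      push_cast; omega
    show Dop n (p + 1) (Diter n g p) x = _
    unfold Dop
    set s : ℕ := n - 2 * (p + 1) + 2 with hsdef
    have hev : (fun y => Diter n g p y / y ^ s) =ᶠ[nhds x]
        (fun y => ∑ k ∈ range (j + 1), cAux n (a k) k p * y ^ (eAux n k p - (s : ℤ))) := by
      filter_upwards [IsOpen.mem_nhds isOpen_Ioi hx] with y hy
      rw [ih hp' y hy, Finset.sum_div]
      refine Finset.sum_congr rfl fun k _ => ?_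
      rw [mul_div_assoc, ← zpow_natCast y s, ← zpow_sub₀ (ne_of_gt hy)]
    rw [hev.deriv_eq]
    have hder : HasDerivAt
        (fun y => ∑ k ∈ range (j + 1), cAux n (a k) k p * y ^ (eAux n k p - (s : ℤ)))
        (∑ k ∈ range (j + 1),
          cAux n (a k) k p * (((eAux n k p - (s : ℤ) : ℤ) : ℝ) * x ^ (eAux n k p - (s : ℤ) - 1))) x := by
      apply HasDerivAt.fun_sum
      intro k _
      exact (hasDerivAt_zpow _ x (Or.inl hx.ne')).const_mul _
    rw [hder.deriv]
    refine Finset.sum_congr rfl fun k _ => ?_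
    rw [show cAux n (a k) k (p + 1)
        = cAux n (a k) k p * ((eAux n k p - ((n : ℤ) - 2 * (p + 1) + 2) : ℤ) : ℝ) from rfl,
      show eAux n k (p + 1) = eAux n k p - ((n : ℤ) - 2 * (p + 1) + 2) - 1 from rfl, ← hs]
    push_cast
    ring

/-- D^{j-1,j}(x) = x^{n-2j+2}·(j-1)!·(a_{j,j-1}/a_{jj})·(x^{n-2j+1} − 1), and in
    particular D^{j-1,j}(x) ≥ 0 for x ≥ 1 (here n - 2j + 1 ≥ 0 since 2j ≤ n). -/
theorem stmt7 (n : ℕ) (ainv : ℕ → ℕ → ℝ)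
    (hinv : ∀ j ≤ n / 2, ∀ k ≤ n / 2,
      (∑ l ∈ Finset.range (n / 2 + 1), ainv j l * aCW n l k) =
        if j = k then 1 else 0)
    (ξ : ℕ → ℝ → ℝ)
    (hξ : ∀ j x, ξ j x = ∑ k ∈ Finset.range (j + 1), ainv j k * x ^ (k * (n - k)))
    (j : ℕ) (hj1 : 1 ≤ j) (hj : 2 * j ≤ n) (x : ℝ) (hx : 0 < x) :
    Diter n (fun y => y ^ n * ξ j y) (j - 1) x =
      x ^ (n - 2 * j + 2) * (Nat.factorial (j - 1) : ℝ) *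
        (aCW n j (j - 1) / aCW n j j) * (x ^ (n - 2 * j + 1) - 1) ∧
    (1 ≤ x → 0 ≤ Diter n (fun y => y ^ n * ξ j y) (j - 1) x) := by
  obtain ⟨m, rfl⟩ : ∃ m, j = m + 1 := ⟨j - 1, by omega⟩
  simp only [Nat.add_sub_cancel]
  have hmn : 2 * m + 2 ≤ n := by omega
  have hjle : m + 1 ≤ n / 2 := by omega
  -- positivity of diagonal entries
  have haCWpos : ∀ k, 2 * k ≤ n → 0 < aCW n k k := by
    intro k hk
    rw [aCW, if_pos le_rfl]
    have h1 : (0:ℝ) < ((Nat.factorial k * Nat.factorial (n - k) : ℕ) : ℝ) := by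
      exact_mod_cast Nat.mul_pos (Nat.factorial_pos _) (Nat.factorial_pos _)
    have h2 : (0:ℝ) < ((Nat.factorial k * Nat.factorial (k - k) * Nat.factorial (n - k - k) : ℕ) : ℝ) := by
      exact_mod_cast Nat.mul_pos (Nat.mul_pos (Nat.factorial_pos _) (Nat.factorial_pos _))
        (Nat.factorial_pos _)
    exact div_pos h1 h2
  -- the inverse matrix is lower triangular
  have hzero : ∀ k, m + 1 < k → k ≤ n / 2 → ainv (m + 1) k = 0 := by
    have key : ∀ M k, m + 1 < k → k ≤ n / 2 → n / 2 - k < M → ainv (m + 1) k = 0 := by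
      intro M
      induction M with
      | zero => intro k _ _ h; omega
      | succ M ih =>
        intro k hk1 hk2 hk3
        have h := hinv (m + 1) hjle k hk2
        rw [if_neg (by omega)] at h
        have hsum : (∑ l ∈ Finset.range (n / 2 + 1), ainv (m + 1) l * aCW n l k)
            = ainv (m + 1) k * aCW n k k := by
          refine Finset.sum_eq_single_of_mem k (Finset.mem_range.2 (by omega)) ?_
          intro l hl hlk
          have hl' : l ≤ n / 2 := by have := Finset.mem_range.1 hl; omega
          rcases lt_or_gt_of_ne hlk with h1 | h1
          · rw [aCW, if_neg (by omega), mul_zero]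
          · rw [ih l (by omega) hl' (by omega), zero_mul]
        rw [hsum] at h
        rcases mul_eq_zero.1 h with h' | h'
        · exact h'
        · exact absurd h' (ne_of_gt (haCWpos k (by omega)))
    intro k h1 h2
    exact key (n / 2 + 1) k h1 h2 (by omega)
  -- diagonal equation
  have hdiag : ainv (m + 1) (m + 1) * aCW n (m + 1) (m + 1) = 1 := by
    have h := hinv (m + 1) hjle (m + 1) hjle
    rw [if_pos rfl] at h
    rw [← h]
    symm
    apply Finset.sum_eq_single_of_mem (m + 1) (Finset.mem_range.2 (by omega))
    intro l hl hlk
    have hl' : l ≤ n / 2 := by have := Finset.mem_range.1 hl; omega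
    rcases lt_or_gt_of_ne hlk with h1 | h1
    · rw [aCW, if_neg (by omega), mul_zero]
    · rw [hzero l (by omega) hl', zero_mul]
  -- subdiagonal equation
  have hoff : ainv (m + 1) m * aCW n m m + ainv (m + 1) (m + 1) * aCW n (m + 1) m = 0 := by
    have h := hinv (m + 1) hjle m (by omega)
    rw [if_neg (by omega)] at h
    have hsub : ({m, m + 1} : Finset ℕ) ⊆ Finset.range (n / 2 + 1) := by
      intro l hl
      simp only [Finset.mem_insert, Finset.mem_singleton] at hl
      rcases hl with rfl | rfl <;> exact Finset.mem_range.2 (by omega)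
    have hss : ∑ l ∈ ({m, m + 1} : Finset ℕ), ainv (m + 1) l * aCW n l m
        = ∑ l ∈ Finset.range (n / 2 + 1), ainv (m + 1) l * aCW n l m := by
      refine Finset.sum_subset hsub ?_
      intro l hl hlnot
      simp only [Finset.mem_insert, Finset.mem_singleton, not_or] at hlnot
      have hl' : l ≤ n / 2 := by have := Finset.mem_range.1 hl; omega
      rcases Nat.lt_or_ge l m with h1 | h1
      · rw [aCW, if_neg (by omega), mul_zero]
      · rw [hzero l (by omega) hl', zero_mul]
    rw [← hss, Finset.sum_insert (by simp), Finset.sum_singleton] at h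
    exact h
  -- descFactorial facts
  have d2 : Nat.descFactorial (m + 1) m = Nat.factorial (m + 1) := by
    have h := Nat.factorial_mul_descFactorial (Nat.le_succ m)
    rwa [show m + 1 - m = 1 from by omega, Nat.factorial_one, one_mul] at h
  have d1 : Nat.descFactorial m m = Nat.factorial m := by
    have h := Nat.factorial_mul_descFactorial (le_refl m)
    rwa [Nat.sub_self, Nat.factorial_zero, one_mul] at h
  have d3 : Nat.factorial (n - m - m) * Nat.descFactorial (n - m) m = Nat.factorial (n - m) := by
    have h := Nat.factorial_mul_descFactorial (n := n - m) (k := m) (by omega)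
    rwa [show n - m - m = n - m - m from rfl] at h
  have d4 : Nat.factorial (n - (m + 1) - m) * Nat.descFactorial (n - (m + 1)) m
      = Nat.factorial (n - (m + 1)) := by
    exact Nat.factorial_mul_descFactorial (by omega)
  -- cast identities for the products
  have hPmNat : (∏ i ∈ range m, (((m : ℕ) : ℤ) - i) * ((n : ℤ) - m - i))
      = ((Nat.descFactorial m m * Nat.descFactorial (n - m) m : ℕ) : ℤ) := by
    rw [Nat.descFactorial_eq_prod_range, Nat.descFactorial_eq_prod_range]
    push_cast
    rw [← Finset.prod_mul_distrib]
    refine Finset.prod_congr rfl fun i hi => ?_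
    have hi' := Finset.mem_range.1 hi
    have c1 : ((m - i : ℕ) : ℤ) = (m : ℤ) - i := by omega
    have c2 : ((n - m - i : ℕ) : ℤ) = (n : ℤ) - m - i := by omega
    rw [c1, c2]
  have hPjNat : (∏ i ∈ range m, (((m + 1 : ℕ) : ℤ) - i) * ((n : ℤ) - (m + 1 : ℕ) - i))
      = ((Nat.descFactorial (m + 1) m * Nat.descFactorial (n - (m + 1)) m : ℕ) : ℤ) := by
    rw [Nat.descFactorial_eq_prod_range, Nat.descFactorial_eq_prod_range]
    push_cast
    rw [← Finset.prod_mul_distrib]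
    refine Finset.prod_congr rfl fun i hi => ?_
    have hi' := Finset.mem_range.1 hi
    have c1 : ((m + 1 - i : ℕ) : ℤ) = (m : ℤ) + 1 - i := by omega
    have c2 : ((n - (m + 1) - i : ℕ) : ℤ) = (n : ℤ) - (m + 1) - i := by omega
    rw [c1, c2]
  -- real versions
  have hPmR : ((∏ i ∈ range m, (((m : ℕ) : ℤ) - i) * ((n : ℤ) - m - i) : ℤ) : ℝ)
      = (Nat.factorial m : ℝ) * aCW n m m := by
    rw [hPmNat, aCW, if_pos le_rfl]
    have hden : ((Nat.factorial m * Nat.factorial (m - m) * Nat.factorial (n - m - m) : ℕ) : ℝ) ≠ 0 := by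
      exact_mod_cast Nat.ne_of_gt (Nat.mul_pos (Nat.mul_pos (Nat.factorial_pos _)
        (Nat.factorial_pos _)) (Nat.factorial_pos _))
    rw [mul_div_assoc', eq_div_iff hden]
    have hnat : (Nat.descFactorial m m * Nat.descFactorial (n - m) m)
        * (Nat.factorial m * Nat.factorial (m - m) * Nat.factorial (n - m - m))
        = Nat.factorial m * (Nat.factorial m * Nat.factorial (n - m)) := by
      rw [d1, Nat.sub_self, Nat.factorial_zero, ← d3]; ring
    exact_mod_cast hnat
  have hPjR : ((∏ i ∈ range m, (((m + 1 : ℕ) : ℤ) - i) * ((n : ℤ) - (m + 1 : ℕ) - i) : ℤ) : ℝ)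
      = (Nat.factorial m : ℝ) * aCW n (m + 1) m := by
    rw [hPjNat, aCW, if_pos (Nat.le_succ m)]
    have hden : ((Nat.factorial m * Nat.factorial (m + 1 - m) * Nat.factorial (n - (m + 1) - m) : ℕ) : ℝ) ≠ 0 := by
      exact_mod_cast Nat.ne_of_gt (Nat.mul_pos (Nat.mul_pos (Nat.factorial_pos _)
        (Nat.factorial_pos _)) (Nat.factorial_pos _))
    rw [mul_div_assoc', eq_div_iff hden]
    have hnat : (Nat.descFactorial (m + 1) m * Nat.descFactorial (n - (m + 1)) m)
        * (Nat.factorial m * Nat.factorial (m + 1 - m) * Nat.factorial (n - (m + 1) - m))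
        = Nat.factorial m * (Nat.factorial (m + 1) * Nat.factorial (n - (m + 1))) := by
      rw [d2, show m + 1 - m = 1 from by omega, Nat.factorial_one, ← d4]; ring
    exact_mod_cast hnat
  -- main diagonal facts
  have hA : 0 < aCW n (m + 1) (m + 1) := haCWpos (m + 1) (by omega)
  have hainv : ainv (m + 1) (m + 1) = 1 / aCW n (m + 1) (m + 1) := by
    rw [eq_div_iff hA.ne']; exact hdiag
  -- the representation of x^n ξ_j
  have hg : ∀ y : ℝ, 0 < y →
      (fun y : ℝ => y ^ n * ξ (m + 1) y) y
        = ∑ k ∈ range (m + 1 + 1), ainv (m + 1) k * y ^ (eAux n k 0) := by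
    intro y hy
    simp only
    rw [hξ, Finset.mul_sum]
    refine Finset.sum_congr rfl fun k hk => ?_
    have hkn : k ≤ n := by have := Finset.mem_range.1 hk; omega
    have hc : ((k * (n - k) : ℕ) : ℤ) = (k : ℤ) * ((n : ℤ) - k) := by
      have h1 : ((n - k : ℕ) : ℤ) = (n : ℤ) - k := by omega
      rw [Nat.cast_mul, h1]
    have hpow : y ^ (eAux n k 0) = y ^ n * y ^ (k * (n - k)) := by
      rw [show eAux n k 0 = (n : ℤ) + (k : ℤ) * ((n : ℤ) - k) from rfl, ← hc,
        zpow_add₀ hy.ne', zpow_natCast, zpow_natCast]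
    rw [hpow]; ring
  have main := diter_eq n (m + 1) (ainv (m + 1)) hj _ hg m (by omega) x hx
  -- evaluate the sum at p = m
  rw [Finset.sum_range_succ, Finset.sum_range_succ] at main
  have hzsum : ∑ k ∈ range m, cAux n (ainv (m + 1) k) k m * x ^ (eAux n k m) = 0 := by
    refine Finset.sum_eq_zero fun k hk => ?_
    rw [cAux_closed, Finset.prod_eq_zero hk (by rw [sub_self, zero_mul])]
    simp
  have he1 : eAux n m m = (n : ℤ) - 2 * m := by rw [eAux_closed]; ring
  have he2 : eAux n (m + 1) m = 2 * (n : ℤ) - 4 * m - 1 := by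
    rw [eAux_closed]; push_cast; ring
  have hc2 : cAux n (ainv (m + 1) (m + 1)) (m + 1) m
      = (Nat.factorial m : ℝ) * (aCW n (m + 1) m / aCW n (m + 1) (m + 1)) := by
    rw [cAux_closed, hPjR, hainv]; ring
  have hc1 : cAux n (ainv (m + 1) m) m m
      = -((Nat.factorial m : ℝ) * (aCW n (m + 1) m / aCW n (m + 1) (m + 1))) := by
    have h5 : ainv (m + 1) m * aCW n m m = -(ainv (m + 1) (m + 1) * aCW n (m + 1) m) := by
      linarith
    calc cAux n (ainv (m + 1) m) m m
        = (Nat.factorial m : ℝ) * (ainv (m + 1) m * aCW n m m) := by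
          rw [cAux_closed, hPmR]; ring
      _ = (Nat.factorial m : ℝ) * (-(ainv (m + 1) (m + 1) * aCW n (m + 1) m)) := by rw [h5]
      _ = -((Nat.factorial m : ℝ) * (aCW n (m + 1) m / aCW n (m + 1) (m + 1))) := by
          rw [hainv]; ring
  have hx1 : x ^ (n - 2 * (m + 1) + 2) = x ^ ((n : ℤ) - 2 * m) := by
    rw [← zpow_natCast]; congr 1; omega
  have hx2 : x ^ (n - 2 * (m + 1) + 1) = x ^ ((n : ℤ) - 2 * m - 1) := by
    rw [← zpow_natCast]; congr 1; omega
  have hmain : Diter n (fun y => y ^ n * ξ (m + 1) y) m x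
      = x ^ (n - 2 * (m + 1) + 2) * (Nat.factorial m : ℝ) *
        (aCW n (m + 1) m / aCW n (m + 1) (m + 1)) * (x ^ (n - 2 * (m + 1) + 1) - 1) := by
    rw [main, hzsum, hc1, hc2, he1, he2, hx1, hx2, zero_add,
      show 2 * (n : ℤ) - 4 * m - 1 = ((n : ℤ) - 2 * m) + ((n : ℤ) - 2 * m - 1) from by ring,
      zpow_add₀ hx.ne']
    ring
  refine ⟨hmain, fun hx1' => ?_⟩
  rw [hmain]
  have hBnn : 0 ≤ aCW n (m + 1) m := by
    rw [aCW, if_pos (Nat.le_succ m)]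
    positivity
  refine mul_nonneg (mul_nonneg (mul_nonneg (pow_nonneg hx.le _) (Nat.cast_nonneg _))
    (div_nonneg hBnn hA.le)) ?_
  rw [sub_nonneg]
  exact one_le_pow₀ hx1'
end
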